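/- In the four-distinct-edge case normalized to the unit square (edges on lines x=0, x=1, y=0, y=1), the discriminant of the bisector conic equals (1−k)², which is nonnegative; hence the bisector is never an ellipse (it is a hyperbola, or a parabola/degenerate conic when k=1). -/
import Mathlib

/-- In the four-distinct-edge case normalized to the unit square (edge lines
`x = 0`, `x = 1`, `y = 0`, `y = 1`), the discriminant `B² − 4AC` of the bisector
conic equals `(1 − k)² ≥ 0`; hence the bisector is never an ellipse. -/
theorem four_edge_discriminant
    (k : ℝ) (hk : 0 < k)
    (a1 a2 a3 b1 b2 b3 c1 c2 c3 d1 d2 d3 : ℝ)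
    (ha : a1 = 1 ∧ a2 = 0 ∧ a3 = 0)      -- edge `E_A` on the line `x = 0`
    (hb : b1 = 1 ∧ b2 = 0 ∧ b3 = -1)     -- edge `E_B` on the line `x = 1`
    (hc : c1 = 0 ∧ c2 = 1 ∧ c3 = 0)      -- edge `E_C` on the line `y = 0`
    (hd : d1 = 0 ∧ d2 = 1 ∧ d3 = -1) :   -- edge `E_D` on the line `y = 1`
    ((b2 * c1 + b1 * c2 - k * (a1 * d2 + a2 * d1)) ^ 2
        - 4 * (b1 * c1 - a1 * d1 * k) * (b2 * c2 - a2 * d2 * k) = (1 - k) ^ 2)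
      ∧ 0 ≤ (b2 * c1 + b1 * c2 - k * (a1 * d2 + a2 * d1)) ^ 2
          - 4 * (b1 * c1 - a1 * d1 * k) * (b2 * c2 - a2 * d2 * k)
      ∧ ¬((b2 * c1 + b1 * c2 - k * (a1 * d2 + a2 * d1)) ^ 2
          - 4 * (b1 * c1 - a1 * d1 * k) * (b2 * c2 - a2 * d2 * k) < 0) := by
  obtain ⟨h1, h2, h3⟩ := ha
  obtain ⟨h4, h5, h6⟩ := hb
  obtain ⟨h7, h8, h9⟩ := hc
  obtain ⟨h10, h11, h12⟩ := hd
  subst h1 h2 h4 h5 h7 h8 h10 h11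
  refine ⟨by ring, by nlinarith [sq_nonneg (1-k)], by simp [not_lt]; nlinarith [sq_nonneg (1-k)]⟩
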